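/- Let G and H be connected graphs each of order at least 3. If the direct product G × H is well-dominated, then every minimum dominating set of G is independent and every minimum dominating set of H is independent. -/

import Mathlib

open SimpleGraph

variable {V : Type*}

/-- Closed neighborhood of a vertex. -/
def closedNbhd (G : SimpleGraph V) (v : V) : Set V := insert v (G.neighborSet v)

/-- Closed neighborhood of a set of vertices. -/
def closedNbhdSet (G : SimpleGraph V) (A : Set V) : Set V := ⋃ a ∈ A, closedNbhd G a

/-- `D` is a dominating set of `G`. -/
def IsDomSet (G : SimpleGraph V) (D : Set V) : Prop :=
  ∀ v, ∃ u ∈ D, v ∈ closedNbhd G u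

/-- `D` is a minimal dominating set of `G`. -/
def IsMinimalDomSet (G : SimpleGraph V) (D : Set V) : Prop :=
  IsDomSet G D ∧ ∀ D' ⊆ D, IsDomSet G D' → D' = D

/-- The domination number `γ`. -/
noncomputable def domNum (G : SimpleGraph V) : ℕ :=
  sInf {n | ∃ D : Set V, IsDomSet G D ∧ D.ncard = n}

/-- The upper domination number `Γ`. -/
noncomputable def upperDomNum (G : SimpleGraph V) : ℕ :=
  sSup {n | ∃ D : Set V, IsMinimalDomSet G D ∧ D.ncard = n}

/-- A graph is well-dominated if `γ = Γ`. -/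
def WellDominated (G : SimpleGraph V) : Prop := domNum G = upperDomNum G

/-- `A` is an independent set of `G`. -/
def IsIndep (G : SimpleGraph V) (A : Set V) : Prop :=
  ∀ u ∈ A, ∀ v ∈ A, ¬ G.Adj u v

/-- `A` is a maximal independent set of `G`. -/
def IsMaxIndep (G : SimpleGraph V) (A : Set V) : Prop :=
  IsIndep G A ∧ ∀ B, IsIndep G B → A ⊆ B → B = A

/-- The independence number `α`. -/
noncomputable def indepNum (G : SimpleGraph V) : ℕ :=
  sSup {n | ∃ A : Set V, IsIndep G A ∧ A.ncard = n}

/-- The strong product of two graphs. -/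
def strongProd {α β : Type*} (G : SimpleGraph α) (H : SimpleGraph β) :
    SimpleGraph (α × β) where
  Adj x y := x ≠ y ∧ (x.1 = y.1 ∨ G.Adj x.1 y.1) ∧ (x.2 = y.2 ∨ H.Adj x.2 y.2)
  symm := by
    constructor
    rintro x y ⟨h1, h2, h3⟩
    refine ⟨h1.symm, ?_, ?_⟩
    · cases h2 with
      | inl h => exact Or.inl h.symm
      | inr h => exact Or.inr h.symm
    · cases h3 with
      | inl h => exact Or.inl h.symm
      | inr h => exact Or.inr h.symm
  loopless := by constructor; rintro x ⟨h1, _⟩; exact h1 rfl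

/-- The direct (tensor) product of two graphs. -/
def tensorProd {α β : Type*} (G : SimpleGraph α) (H : SimpleGraph β) :
    SimpleGraph (α × β) where
  Adj x y := G.Adj x.1 y.1 ∧ H.Adj x.2 y.2
  symm := ⟨fun _ _ h => ⟨h.1.symm, h.2.symm⟩⟩
  loopless := ⟨fun _ h => G.irrefl h.1⟩

/-- The corona `G ⊙ K₁`. -/
def corona {α : Type*} (G : SimpleGraph α) : SimpleGraph (α ⊕ α) :=
  SimpleGraph.fromRel (fun x y =>
    match x, y with
    | Sum.inl u, Sum.inl v => G.Adj u v
    | Sum.inl u, Sum.inr v => u = v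
    | _, _ => False)

/-- The private neighborhood `pn[u,D] = N[u] - N[D - {u}]`. -/
def privateNbhd (G : SimpleGraph V) (D : Set V) (u : V) : Set V :=
  {x | x ∈ closedNbhd G u ∧ ∀ d ∈ D, d ≠ u → x ∉ closedNbhd G d}

/-- A set `D` is open irredundant if every vertex of `D` has an external
private neighbor. -/
def IsOpenIrred (G : SimpleGraph V) (D : Set V) : Prop :=
  ∀ u ∈ D, ∃ x ∈ G.neighborSet u, ∀ d ∈ D, d ≠ u → x ∉ closedNbhd G d


section AuxStmt9

open Set

private lemma mem_closedNbhd_iff' {V : Type*} {G : SimpleGraph V} {u v : V} :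
    v ∈ closedNbhd G u ↔ v = u ∨ G.Adj u v := by
  simp [closedNbhd, SimpleGraph.mem_neighborSet]

private lemma ncard_sprod' {α β : Type*} (s : Set α) (t : Set β) :
    (s ×ˢ t).ncard = s.ncard * t.ncard := by
  rw [← Nat.card_coe_set_eq, ← Nat.card_coe_set_eq, ← Nat.card_coe_set_eq,
    Nat.card_congr (Equiv.Set.prod s t), Nat.card_prod]

private lemma walk_closed' {β : Type*} {H : SimpleGraph β} {S : Set β}
    (hS : ∀ a ∈ S, ∀ b, H.Adj a b → b ∈ S) :
    ∀ {x y : β}, H.Walk x y → x ∈ S → y ∈ S := by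
  intro x y p
  induction p with
  | nil => exact id
  | cons h _ ih => exact fun hx => ih (hS _ hx _ h)

private lemma exists_adj_of_connected' {β : Type*} [Fintype β] {H : SimpleGraph β}
    (hH : H.Connected) (hcard : 2 ≤ Fintype.card β) (x : β) : ∃ y, H.Adj x y := by
  obtain ⟨y, hy⟩ := Fintype.exists_ne_of_one_lt_card (by omega) x
  obtain ⟨p⟩ := hH.preconnected x y
  cases p with
  | nil => exact absurd rfl hy
  | cons h _ => exact ⟨_, h⟩

/-- In a connected graph of order at least 3, there is a vertex `h0` such that
every vertex has a neighbor different from `h0`. -/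
private lemma exists_avoid' {β : Type*} [Fintype β] {H : SimpleGraph β}
    (hH : H.Connected) (hcard : 3 ≤ Fintype.card β) :
    ∃ h0 : β, ∀ x, ∃ y, H.Adj x y ∧ y ≠ h0 := by
  by_cases hdeg : ∀ x : β, ∃ y z, H.Adj x y ∧ H.Adj x z ∧ y ≠ z
  · have hne : Nonempty β := Fintype.card_pos_iff.mp (by omega)
    obtain ⟨h0⟩ := hne
    refine ⟨h0, fun x => ?_⟩
    obtain ⟨y, z, hy, hz, hyz⟩ := hdeg x
    by_cases hyh : y = h0
    · exact ⟨z, hz, fun hzz => hyz (hyh.trans hzz.symm)⟩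
    · exact ⟨y, hy, hyh⟩
  · push_neg at hdeg
    obtain ⟨x0, hx0⟩ := hdeg
    obtain ⟨w, hw⟩ := exists_adj_of_connected' hH (by omega) x0
    refine ⟨x0, fun x => ?_⟩
    by_contra hx
    push_neg at hx
    obtain ⟨y, hy⟩ := exists_adj_of_connected' hH (by omega) x
    have hyx0 : y = x0 := hx y hy
    have hAdj : H.Adj x x0 := hyx0 ▸ hy
    have hxw : x = w := hx0 x w hAdj.symm hw
    have hwall : ∀ b, H.Adj w b → b = x0 := fun b hb => hx b (by rw [hxw]; exact hb)
    -- now all neighbors of w are x0, and all neighbors of x0 are w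
    have hclosed : ∀ a ∈ ({x0, w} : Set β), ∀ b, H.Adj a b → b ∈ ({x0, w} : Set β) := by
      rintro a (rfl | rfl) b hb
      · exact Or.inr (hx0 b w hb hw)
      · exact Or.inl (hwall b hb)
    have hz : ∃ z : β, z ≠ x0 ∧ z ≠ w := by
      by_contra hcon
      push_neg at hcon
      have hsub : (Set.univ : Set β) ⊆ {x0, w} := by
        intro z _
        by_cases h1 : z = x0
        · exact Or.inl h1
        · exact Or.inr (hcon z h1)
      have h2 := Set.ncard_le_ncard hsub (Set.toFinite _)
      rw [Set.ncard_univ, Nat.card_eq_fintype_card] at h2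
      have h3 : ({x0, w} : Set β).ncard ≤ 2 :=
        le_trans (Set.ncard_insert_le _ _) (by simp)
      omega
    obtain ⟨z, hz1, hz2⟩ := hz
    obtain ⟨p⟩ := hH.preconnected x0 z
    have hmem := walk_closed' hclosed p (Or.inl rfl)
    rcases hmem with h | h
    · exact hz1 h
    · exact hz2 h

/-- There is an independent dominating set of cardinality at least `domNum G`. -/
private lemma exists_big_indep' {α : Type*} [Fintype α] (G : SimpleGraph α) :
    ∃ I : Set α, IsIndep G I ∧ IsDomSet G I ∧ domNum G ≤ I.ncard := by
  classical
  obtain ⟨I, hImem, hImax⟩ := Finset.exists_max_image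
      (Finset.univ.powerset.filter fun s : Finset α => IsIndep G ↑s) Finset.card
      ⟨∅, by simp [IsIndep]⟩
  rw [Finset.mem_filter] at hImem
  have hind : IsIndep G ↑I := hImem.2
  have hdom : IsDomSet G (↑I : Set α) := by
    intro v
    by_cases hv : v ∈ I
    · exact ⟨v, by simpa using hv, mem_closedNbhd_iff'.2 (Or.inl rfl)⟩
    · by_cases hadj : ∃ u ∈ I, G.Adj u v
      · obtain ⟨u, hu, ha⟩ := hadj
        exact ⟨u, by simpa using hu, mem_closedNbhd_iff'.2 (Or.inr ha)⟩
      · exfalso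
        push_neg at hadj
        have hins : IsIndep G ↑(insert v I) := by
          intro a ha b hb hab
          simp only [Finset.coe_insert, Set.mem_insert_iff, Finset.mem_coe] at ha hb
          rcases ha with rfl | ha <;> rcases hb with rfl | hb
          · exact G.irrefl hab
          · exact hadj b hb hab.symm
          · exact hadj a ha hab
          · exact hind a (by simpa using ha) b (by simpa using hb) hab
        have hle := hImax _ (Finset.mem_filter.2
          ⟨Finset.mem_powerset.2 (Finset.subset_univ _), hins⟩)
        rw [Finset.card_insert_of_notMem hv] at hle
        omega
  have hIcard : domNum G ≤ (↑I : Set α).ncard := Nat.sInf_le ⟨↑I, hdom, rfl⟩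
  exact ⟨↑I, hind, hdom, hIcard⟩

private lemma tensor_adj' {α β : Type*} {G : SimpleGraph α} {H : SimpleGraph β}
    {x y : α × β} : (tensorProd G H).Adj x y ↔ G.Adj x.1 y.1 ∧ H.Adj x.2 y.2 := Iff.rfl

/-- The core lemma : if `G × H` is well-dominated, `H` connected of order ≥ 3,
then every minimum dominating set of `G` is independent. -/
private lemma core_stmt9 {α β : Type*} [Fintype α] [Fintype β]
    (G : SimpleGraph α) (H : SimpleGraph β)
    (hH : H.Connected) (hβ : 3 ≤ Fintype.card β)
    (h : WellDominated (tensorProd G H)) :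
    ∀ D : Set α, IsDomSet G D → D.ncard = domNum G → IsIndep G D := by
  intro D hDdom hDcard
  by_contra hns
  unfold IsIndep at hns
  push_neg at hns
  obtain ⟨u, huD, v, hvD, huv⟩ := hns
  have hune : u ≠ v := huv.ne
  obtain ⟨h0, hh0⟩ := exists_avoid' hH hβ
  set K := tensorProd G H with hK
  obtain ⟨I, hIind, hIdom, hIcard⟩ := exists_big_indep' G
  -- The big minimal dominating set S
  set S : Set (α × β) := I ×ˢ Set.univ with hSdef
  have hSdom : IsDomSet K S := by
    rintro ⟨g, h'⟩
    by_cases hg : g ∈ I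
    · exact ⟨(g, h'), ⟨hg, trivial⟩, mem_closedNbhd_iff'.2 (Or.inl rfl)⟩
    · have hnb : ∃ i ∈ I, G.Adj i g := by
        obtain ⟨i, hiI, hi⟩ := hIdom g
        rcases mem_closedNbhd_iff'.1 hi with rfl | ha
        · exact absurd hiI hg
        · exact ⟨i, hiI, ha⟩
      obtain ⟨i, hiI, hig⟩ := hnb
      obtain ⟨y, hy, _⟩ := hh0 h'
      exact ⟨(i, y), ⟨hiI, trivial⟩,
        mem_closedNbhd_iff'.2 (Or.inr (tensor_adj'.2 ⟨hig, hy.symm⟩))⟩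
  have hSmin : IsMinimalDomSet K S := by
    refine ⟨hSdom, fun S' hsub hdom' => ?_⟩
    refine Set.Subset.antisymm hsub fun p hp => ?_
    obtain ⟨q, hqS', hq⟩ := hdom' p
    rcases mem_closedNbhd_iff'.1 hq with rfl | hadj
    · exact hqS'
    · exact absurd (tensor_adj'.1 hadj).1 (hIind q.1 (hsub hqS').1 p.1 hp.1)
  -- The small dominating set T
  set T : Set (α × β) := ((D \ {u}) ×ˢ Set.univ) ∪ ({u} ×ˢ (Set.univ \ {h0})) with hTdef
  have hTdom : IsDomSet K T := by
    rintro ⟨g, hh⟩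
    by_cases hcase : ∃ d ∈ D, d ≠ u ∧ (g = d ∨ G.Adj d g)
    · obtain ⟨d, hdD, hdu, hgd⟩ := hcase
      rcases hgd with rfl | hadj
      · exact ⟨(g, hh), Or.inl ⟨⟨hdD, hdu⟩, trivial⟩, mem_closedNbhd_iff'.2 (Or.inl rfl)⟩
      · obtain ⟨y, hy, _⟩ := hh0 hh
        exact ⟨(d, y), Or.inl ⟨⟨hdD, hdu⟩, trivial⟩,
          mem_closedNbhd_iff'.2 (Or.inr (tensor_adj'.2 ⟨hadj, hy.symm⟩))⟩
    · push_neg at hcase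
      obtain ⟨d, hdD, hd⟩ := hDdom g
      have hdu : d = u := by
        by_contra hne
        rcases mem_closedNbhd_iff'.1 hd with heq | ha
        · exact (hcase d hdD hne).1 heq
        · exact (hcase d hdD hne).2 ha
      have hd' : g ∈ closedNbhd G u := hdu ▸ hd
      rcases mem_closedNbhd_iff'.1 hd' with rfl | hadj
      · obtain ⟨y, hy, _⟩ := hh0 hh
        exact ⟨(v, y), Or.inl ⟨⟨hvD, fun hvu => hune hvu.symm⟩, trivial⟩,
          mem_closedNbhd_iff'.2 (Or.inr (tensor_adj'.2 ⟨huv.symm, hy.symm⟩))⟩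
      · obtain ⟨y, hy, hyne⟩ := hh0 hh
        exact ⟨(u, y), Or.inr ⟨rfl, trivial, hyne⟩,
          mem_closedNbhd_iff'.2 (Or.inr (tensor_adj'.2 ⟨hadj, hy.symm⟩))⟩
  -- cardinalities
  have hm : (Set.univ : Set β).ncard = Fintype.card β := by
    rw [Set.ncard_univ, Nat.card_eq_fintype_card]
  have hk1 : 1 ≤ D.ncard := (Set.ncard_pos (Set.toFinite _)).2 ⟨u, huD⟩
  have hdisj : Disjoint ((D \ {u}) ×ˢ (Set.univ : Set β)) ({u} ×ˢ (Set.univ \ {h0})) := by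
    rw [Set.disjoint_left]
    rintro ⟨a, b⟩ h1 h2
    exact h1.1.2 h2.1
  have hTcard : T.ncard = (D.ncard - 1) * Fintype.card β + (Fintype.card β - 1) := by
    rw [hTdef, Set.ncard_union_eq hdisj (Set.toFinite _) (Set.toFinite _),
      ncard_sprod', ncard_sprod', Set.ncard_diff_singleton_of_mem huD, hm,
      Set.ncard_singleton, one_mul,
      Set.ncard_diff (Set.subset_univ _) (Set.toFinite _),
      hm, Set.ncard_singleton]
  have hScard : S.ncard = I.ncard * Fintype.card β := by
    rw [hSdef, ncard_sprod', hm]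
  have hγ : domNum K ≤ T.ncard := Nat.sInf_le ⟨T, hTdom, rfl⟩
  have hbdd : BddAbove {n | ∃ E : Set (α × β), IsMinimalDomSet K E ∧ E.ncard = n} := by
    refine ⟨Fintype.card (α × β), ?_⟩
    rintro n ⟨E, _, rfl⟩
    have hE := Set.ncard_le_ncard (Set.subset_univ E) (Set.toFinite _)
    rwa [Set.ncard_univ, Nat.card_eq_fintype_card] at hE
  have hΓ : S.ncard ≤ upperDomNum K := le_csSup hbdd ⟨S, hSmin, rfl⟩
  obtain ⟨k', hk'⟩ : ∃ k', D.ncard = k' + 1 := ⟨D.ncard - 1, by omega⟩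
  obtain ⟨m', hm'⟩ : ∃ m', Fintype.card β = m' + 1 := ⟨Fintype.card β - 1, by omega⟩
  have hIk : k' + 1 ≤ I.ncard := by
    rw [← hk', hDcard]; exact hIcard
  have hlt : T.ncard < S.ncard := by
    have h1 : T.ncard = k' * (m' + 1) + m' := by
      rw [hTcard, hk', hm']; simp
    have h2 : T.ncard + 1 = (k' + 1) * (m' + 1) := by rw [h1]; ring
    have h3 : (k' + 1) * (m' + 1) ≤ I.ncard * (m' + 1) :=
      Nat.mul_le_mul hIk (le_refl _)
    rw [hScard, hm']
    omega
  have hWD : domNum K = upperDomNum K := h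
  omega

private lemma isDom_image' {α β : Type*} (e : α ≃ β) {G : SimpleGraph α} {G' : SimpleGraph β}
    (he : ∀ x y, G.Adj x y ↔ G'.Adj (e x) (e y)) {D : Set α} (hD : IsDomSet G D) :
    IsDomSet G' (e '' D) := by
  intro w
  obtain ⟨d, hdD, hd⟩ := hD (e.symm w)
  rcases mem_closedNbhd_iff'.1 hd with heq | hadj
  · exact ⟨e d, ⟨d, hdD, rfl⟩, mem_closedNbhd_iff'.2 (Or.inl (by rw [← heq]; simp))⟩
  · refine ⟨e d, ⟨d, hdD, rfl⟩, mem_closedNbhd_iff'.2 (Or.inr ?_)⟩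
    have := (he d (e.symm w)).1 hadj
    simpa using this

private lemma isMin_image' {α β : Type*} (e : α ≃ β) {G : SimpleGraph α} {G' : SimpleGraph β}
    (he : ∀ x y, G.Adj x y ↔ G'.Adj (e x) (e y)) {D : Set α} (hD : IsMinimalDomSet G D) :
    IsMinimalDomSet G' (e '' D) := by
  obtain ⟨h1, h2⟩ := hD
  have he' : ∀ x y, G'.Adj x y ↔ G.Adj (e.symm x) (e.symm y) := by
    intro x y
    rw [he (e.symm x) (e.symm y)]
    simp
  refine ⟨isDom_image' e he h1, fun E hE hEdom => ?_⟩
  have hsub : e.symm '' E ⊆ D := by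
    rintro x ⟨y, hyE, rfl⟩
    obtain ⟨d, hdD, hde⟩ := hE hyE
    rw [← hde]
    simpa using hdD
  have hdom' : IsDomSet G (e.symm '' E) := isDom_image' e.symm he' hEdom
  have heq := h2 _ hsub hdom'
  calc E = e '' (e.symm '' E) := by rw [Set.image_image]; simp
    _ = e '' D := by rw [heq]

private lemma domNum_set_sub' {α β : Type*} (e : α ≃ β) {G : SimpleGraph α}
    {G' : SimpleGraph β} (he : ∀ x y, G.Adj x y ↔ G'.Adj (e x) (e y)) :
    {n | ∃ D : Set α, IsDomSet G D ∧ D.ncard = n} ⊆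
      {n | ∃ D : Set β, IsDomSet G' D ∧ D.ncard = n} := by
  rintro n ⟨D, h1, rfl⟩
  exact ⟨e '' D, isDom_image' e he h1, Set.ncard_image_of_injective _ e.injective⟩

private lemma upperDomNum_set_sub' {α β : Type*} (e : α ≃ β) {G : SimpleGraph α}
    {G' : SimpleGraph β} (he : ∀ x y, G.Adj x y ↔ G'.Adj (e x) (e y)) :
    {n | ∃ D : Set α, IsMinimalDomSet G D ∧ D.ncard = n} ⊆
      {n | ∃ D : Set β, IsMinimalDomSet G' D ∧ D.ncard = n} := by
  rintro n ⟨D, h1, rfl⟩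
  exact ⟨e '' D, isMin_image' e he h1, Set.ncard_image_of_injective _ e.injective⟩

private lemma wellDom_equiv' {α β : Type*} (e : α ≃ β) {G : SimpleGraph α}
    {G' : SimpleGraph β} (he : ∀ x y, G.Adj x y ↔ G'.Adj (e x) (e y))
    (h : WellDominated G) : WellDominated G' := by
  have he' : ∀ x y, G'.Adj x y ↔ G.Adj (e.symm x) (e.symm y) := by
    intro x y
    rw [he (e.symm x) (e.symm y)]
    simp
  have h1 : {n | ∃ D : Set α, IsDomSet G D ∧ D.ncard = n} =
      {n | ∃ D : Set β, IsDomSet G' D ∧ D.ncard = n} :=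
    Set.Subset.antisymm (domNum_set_sub' e he) (domNum_set_sub' e.symm he')
  have h2 : {n | ∃ D : Set α, IsMinimalDomSet G D ∧ D.ncard = n} =
      {n | ∃ D : Set β, IsMinimalDomSet G' D ∧ D.ncard = n} :=
    Set.Subset.antisymm (upperDomNum_set_sub' e he) (upperDomNum_set_sub' e.symm he')
  unfold WellDominated domNum upperDomNum at h ⊢
  rw [← h1, ← h2]
  exact h

private lemma wellDom_swap' {α β : Type*} {G : SimpleGraph α} {H : SimpleGraph β}
    (h : WellDominated (tensorProd G H)) : WellDominated (tensorProd H G) := by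
  refine wellDom_equiv' (Equiv.prodComm α β) (fun x y => ?_) h
  constructor
  · rintro ⟨h1, h2⟩; exact ⟨h2, h1⟩
  · rintro ⟨h1, h2⟩; exact ⟨h2, h1⟩

end AuxStmt9

/-- If `G × H` is well-dominated (both factors connected of order `≥ 3`), then
every minimum dominating set of `G` and of `H` is independent. -/
theorem stmt_9 {α β : Type*} [Fintype α] [Fintype β]
    (G : SimpleGraph α) (H : SimpleGraph β)
    (hG : G.Connected) (hH : H.Connected)
    (hα : 3 ≤ Fintype.card α) (hβ : 3 ≤ Fintype.card β)
    (h : WellDominated (tensorProd G H)) :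
    (∀ D : Set α, IsDomSet G D → D.ncard = domNum G → IsIndep G D) ∧
    (∀ D : Set β, IsDomSet H D → D.ncard = domNum H → IsIndep H D) := by
  exact ⟨core_stmt9 G H hH hβ h, core_stmt9 H G hG hα (wellDom_swap' h)⟩
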